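/- Let (X, μ) be a finite measure space, δ a positive integer, β > 0, γ ∈ (0,1), and let u, v : X → ℝ be measurable functions in L^{2δ+2}(μ). Set w = u − v and C(t) = t(1 − t^δ)(t^δ − γ). Then β ∫ (C(u) − C(v))·w dμ ≤ −βγ ∫ w² dμ − (β/4) ∫ u^{2δ} w² dμ − (β/4) ∫ v^{2δ} w² dμ + β·2^{2δ−1}(1+γ)²(δ+1)² ∫ w² dμ. -/

import Mathlib

open MeasureTheory

private lemma huxley_pe {a b : ℝ} {i j m : ℕ} (h : i + j = m) :
    |a|^i * |b|^j ≤ |a|^m + |b|^m := by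
  have ha : (0:ℝ) ≤ |a|^m := by positivity
  have hb : (0:ℝ) ≤ |b|^m := by positivity
  rcases le_total |a| |b| with hab | hab
  · calc |a|^i * |b|^j ≤ |b|^i * |b|^j :=
          mul_le_mul_of_nonneg_right (pow_le_pow_left₀ (abs_nonneg a) hab i) (by positivity)
      _ = |b|^m := by rw [← pow_add, h]
      _ ≤ |a|^m + |b|^m := by linarith
  · calc |a|^i * |b|^j ≤ |a|^i * |a|^j :=
          mul_le_mul_of_nonneg_left (pow_le_pow_left₀ (abs_nonneg b) hab j) (by positivity)
      _ = |a|^m := by rw [← pow_add, h]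
      _ ≤ |a|^m + |b|^m := by linarith

private lemma huxley_MB (a b : ℝ) {k m : ℕ} (h : k ≤ m) :
    (max 1 (max |a| |b|))^k ≤ 1 + |a|^m + |b|^m := by
  have ha : (0:ℝ) ≤ |a|^m := by positivity
  have hb : (0:ℝ) ≤ |b|^m := by positivity
  set M := max 1 (max |a| |b|) with hM
  have hM1 : (1:ℝ) ≤ M := le_max_left _ _
  have h2 : M^k ≤ M^m := pow_le_pow_right₀ hM1 h
  have h3 : M^m ≤ 1 + |a|^m + |b|^m := by
    rcases max_cases 1 (max |a| |b|) with ⟨hE,_⟩ | ⟨hE,_⟩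
    · rw [hM, hE, one_pow]; linarith
    · rcases max_cases |a| |b| with ⟨hF,_⟩ | ⟨hF,_⟩
      · rw [hM, hE, hF]; linarith
      · rw [hM, hE, hF]; linarith
  linarith

private lemma huxley_lemA (δ : ℕ) (a b : ℝ) :
    (1/2) * (a^(2*δ) + b^(2*δ)) * (a-b)^2 ≤ (a^(2*δ+1) - b^(2*δ+1)) * (a-b) := by
  have hs : 0 ≤ (a^2 - b^2) * ((a^2)^δ - (b^2)^δ) := by
    rcases le_total (a^2) (b^2) with h | h
    · have := pow_le_pow_left₀ (sq_nonneg a) h δ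
      nlinarith
    · have := pow_le_pow_left₀ (sq_nonneg b) h δ
      nlinarith
  have h1 : a^(2*δ) = (a^2)^δ := by rw [pow_mul]
  have h2 : b^(2*δ) = (b^2)^δ := by rw [pow_mul]
  have h3 : a^(2*δ+1) = (a^2)^δ * a := by rw [pow_succ, pow_mul]
  have h4 : b^(2*δ+1) = (b^2)^δ * b := by rw [pow_succ, pow_mul]
  rw [h1, h2, h3, h4]
  nlinarith [hs]

private lemma huxley_lemB (n : ℕ) (a b : ℝ) :
    |a^n - b^n| ≤ (n : ℝ) * (|a|^(n-1) + |b|^(n-1)) * |a - b| := by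
  rw [← geom_sum₂_mul a b n, abs_mul]
  apply mul_le_mul_of_nonneg_right _ (abs_nonneg _)
  calc |∑ i ∈ Finset.range n, a ^ i * b ^ (n - 1 - i)|
      ≤ ∑ i ∈ Finset.range n, |a ^ i * b ^ (n - 1 - i)| := Finset.abs_sum_le_sum_abs _ _
    _ ≤ ∑ i ∈ Finset.range n, (|a|^(n-1) + |b|^(n-1)) := by
        apply Finset.sum_le_sum
        intro i hi
        have hi' := Finset.mem_range.mp hi
        rw [abs_mul, abs_pow, abs_pow]
        exact huxley_pe (by omega)
    _ = (n : ℝ) * (|a|^(n-1) + |b|^(n-1)) := by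
        rw [Finset.sum_const, Finset.card_range, nsmul_eq_mul]

private lemma huxley_ptwise (δ : ℕ) (hδ : 0 < δ) (γ : ℝ) (hγ0 : 0 < γ) (hγ1 : γ < 1)
    (a b : ℝ) :
    (a*(1-a^δ)*(a^δ-γ) - b*(1-b^δ)*(b^δ-γ)) * (a-b) ≤
      -γ*(a-b)^2 - (1/4)*(a^(2*δ)*(a-b)^2) - (1/4)*(b^(2*δ)*(a-b)^2)
      + 2^(2*δ-1)*(1+γ)^2*((δ:ℝ)+1)^2*(a-b)^2 := by
  set c : ℝ := (1+γ)*((δ:ℝ)+1) with hc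
  have hc0 : 0 < c := by positivity
  have hB := huxley_lemB (δ+1) a b
  simp only [Nat.add_sub_cancel] at hB
  push_cast at hB
  have habs : (a^(δ+1)-b^(δ+1))*(a-b) ≤ ((δ:ℝ)+1)*(|a|^δ+|b|^δ)*(a-b)^2 := by
    have h1 : (a^(δ+1)-b^(δ+1))*(a-b) ≤ |a^(δ+1)-b^(δ+1)| * |a - b| := by
      rw [← abs_mul]; exact le_abs_self _
    have h2 := mul_le_mul_of_nonneg_right hB (abs_nonneg (a-b))
    have h3 : |a - b| * |a - b| = (a-b)^2 := by rw [← sq, sq_abs]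
    rw [mul_assoc, h3] at h2
    exact le_trans h1 h2
  have f1 : (1+γ)*((a^(δ+1)-b^(δ+1))*(a-b)) ≤ c*|a|^δ*(a-b)^2 + c*|b|^δ*(a-b)^2 := by
    have h := mul_le_mul_of_nonneg_left habs (by linarith : (0:ℝ) ≤ 1+γ)
    calc (1+γ)*((a^(δ+1)-b^(δ+1))*(a-b)) ≤ (1+γ)*(((δ:ℝ)+1)*(|a|^δ+|b|^δ)*(a-b)^2) := h
      _ = c*|a|^δ*(a-b)^2 + c*|b|^δ*(a-b)^2 := by rw [hc]; ring
  have hea : a^(2*δ) = |a|^δ * |a|^δ := by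
    rw [← pow_add, ← two_mul, pow_mul, pow_mul, sq_abs]
  have heb : b^(2*δ) = |b|^δ * |b|^δ := by
    rw [← pow_add, ← two_mul, pow_mul, pow_mul, sq_abs]
  have hYa : c*|a|^δ ≤ (1/4)*a^(2*δ) + c^2 := by nlinarith [sq_nonneg (|a|^δ - 2*c)]
  have hYb : c*|b|^δ ≤ (1/4)*b^(2*δ) + c^2 := by nlinarith [sq_nonneg (|b|^δ - 2*c)]
  have f3 : c*|a|^δ*(a-b)^2 ≤ (1/4)*(a^(2*δ)*(a-b)^2) + c^2*(a-b)^2 := by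
    calc c*|a|^δ*(a-b)^2 ≤ ((1/4)*a^(2*δ) + c^2)*(a-b)^2 :=
          mul_le_mul_of_nonneg_right hYa (sq_nonneg _)
      _ = (1/4)*(a^(2*δ)*(a-b)^2) + c^2*(a-b)^2 := by ring
  have f4 : c*|b|^δ*(a-b)^2 ≤ (1/4)*(b^(2*δ)*(a-b)^2) + c^2*(a-b)^2 := by
    calc c*|b|^δ*(a-b)^2 ≤ ((1/4)*b^(2*δ) + c^2)*(a-b)^2 :=
          mul_le_mul_of_nonneg_right hYb (sq_nonneg _)
      _ = (1/4)*(b^(2*δ)*(a-b)^2) + c^2*(a-b)^2 := by ring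
  have hK : 2*c^2 ≤ 2^(2*δ-1)*(1+γ)^2*((δ:ℝ)+1)^2 := by
    have h2 : (2:ℝ) ≤ 2^(2*δ-1) := by
      calc (2:ℝ) = 2^1 := (pow_one 2).symm
        _ ≤ 2^(2*δ-1) := pow_le_pow_right₀ one_le_two (by omega)
    calc 2*c^2 ≤ 2^(2*δ-1)*c^2 := mul_le_mul_of_nonneg_right h2 (sq_nonneg c)
      _ = 2^(2*δ-1)*(1+γ)^2*((δ:ℝ)+1)^2 := by rw [hc]; ring
  have f5 : 2*(c^2*(a-b)^2) ≤ 2^(2*δ-1)*(1+γ)^2*((δ:ℝ)+1)^2*(a-b)^2 := by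
    calc 2*(c^2*(a-b)^2) = (2*c^2)*(a-b)^2 := by ring
      _ ≤ 2^(2*δ-1)*(1+γ)^2*((δ:ℝ)+1)^2*(a-b)^2 :=
          mul_le_mul_of_nonneg_right hK (sq_nonneg _)
  have hA' : (1/2)*(a^(2*δ)*(a-b)^2) + (1/2)*(b^(2*δ)*(a-b)^2) ≤
      (a^(2*δ+1)-b^(2*δ+1))*(a-b) := by
    have h := huxley_lemA δ a b
    calc (1/2)*(a^(2*δ)*(a-b)^2) + (1/2)*(b^(2*δ)*(a-b)^2)
        = (1/2)*(a^(2*δ)+b^(2*δ))*(a-b)^2 := by ring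
      _ ≤ (a^(2*δ+1)-b^(2*δ+1))*(a-b) := h
  have hE : (a*(1-a^δ)*(a^δ-γ) - b*(1-b^δ)*(b^δ-γ)) * (a-b) =
      -γ*(a-b)^2 + (1+γ)*((a^(δ+1)-b^(δ+1))*(a-b)) - (a^(2*δ+1)-b^(2*δ+1))*(a-b) := by
    ring
  rw [hE]
  linarith [f1, f3, f4, f5, hA']

private lemma habs2 (a b : ℝ) : |a - b| ≤ |a| + |b| := by
  rw [sub_eq_add_neg]
  exact (abs_add_le a (-b)).trans (by rw [abs_neg])

private lemma bnd_w (δ : ℕ) (a b : ℝ) :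
    |(a-b)^2| ≤ 4 * (1 + |a|^(2*δ+2) + |b|^(2*δ+2)) := by
  set M := max 1 (max |a| |b|) with hM
  have hM1 : (1:ℝ) ≤ M := le_max_left _ _
  have hM0 : (0:ℝ) ≤ M := le_trans zero_le_one hM1
  have hMa : |a| ≤ M := le_trans (le_max_left _ _) (le_max_right _ _)
  have hMb : |b| ≤ M := le_trans (le_max_right _ _) (le_max_right _ _)
  have hab : |a - b| ≤ 2*M := (habs2 a b).trans (by linarith)
  calc |(a-b)^2| = |a-b|^2 := by rw [abs_of_nonneg (sq_nonneg _), sq_abs]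
    _ ≤ (2*M)^2 := pow_le_pow_left₀ (abs_nonneg _) hab 2
    _ = 4*M^2 := by ring
    _ ≤ 4*M^(2*δ+2) := by
        have := pow_le_pow_right₀ hM1 (show 2 ≤ 2*δ+2 by omega)
        linarith
    _ ≤ 4 * (1 + |a|^(2*δ+2) + |b|^(2*δ+2)) := by
        have := huxley_MB a b (le_refl (2*δ+2))
        linarith

private lemma bnd_uw (δ : ℕ) (a b : ℝ) :
    |a^(2*δ) * (a-b)^2| ≤ 4 * (1 + |a|^(2*δ+2) + |b|^(2*δ+2)) := by
  set M := max 1 (max |a| |b|) with hM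
  have hM1 : (1:ℝ) ≤ M := le_max_left _ _
  have hM0 : (0:ℝ) ≤ M := le_trans zero_le_one hM1
  have hMa : |a| ≤ M := le_trans (le_max_left _ _) (le_max_right _ _)
  have hMb : |b| ≤ M := le_trans (le_max_right _ _) (le_max_right _ _)
  have hab : |a - b| ≤ 2*M := (habs2 a b).trans (by linarith)
  calc |a^(2*δ) * (a-b)^2| = |a|^(2*δ) * |a-b|^2 := by
        rw [abs_mul, abs_pow, abs_pow]
    _ ≤ M^(2*δ) * (2*M)^2 :=
        mul_le_mul (pow_le_pow_left₀ (abs_nonneg a) hMa _)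
          (pow_le_pow_left₀ (abs_nonneg _) hab 2) (by positivity) (by positivity)
    _ = 4*M^(2*δ+2) := by ring
    _ ≤ 4 * (1 + |a|^(2*δ+2) + |b|^(2*δ+2)) := by
        have := huxley_MB a b (le_refl (2*δ+2))
        linarith

private lemma bnd_C (δ : ℕ) (γ : ℝ) (hγ0 : 0 < γ) (hγ1 : γ < 1) (a b : ℝ) :
    |(a*(1-a^δ)*(a^δ-γ) - b*(1-b^δ)*(b^δ-γ)) * (a-b)| ≤
      16 * (1 + |a|^(2*δ+2) + |b|^(2*δ+2)) := by
  set M := max 1 (max |a| |b|) with hM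
  have hM1 : (1:ℝ) ≤ M := le_max_left _ _
  have hM0 : (0:ℝ) ≤ M := le_trans zero_le_one hM1
  have hMa : |a| ≤ M := le_trans (le_max_left _ _) (le_max_right _ _)
  have hMb : |b| ≤ M := le_trans (le_max_right _ _) (le_max_right _ _)
  have hab : |a - b| ≤ 2*M := (habs2 a b).trans (by linarith)
  have hMδ : (1:ℝ) ≤ M^δ := one_le_pow₀ hM1
  have hCt : ∀ t : ℝ, |t| ≤ M → |t*(1-t^δ)*(t^δ-γ)| ≤ 4*M^(2*δ+1) := by
    intro t ht
    have h1 : |1 - t^δ| ≤ 2*M^δ := by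
      have := habs2 1 (t^δ)
      have h' : |t^δ| ≤ M^δ := by
        rw [abs_pow]; exact pow_le_pow_left₀ (abs_nonneg t) ht δ
      rw [abs_one] at this
      linarith
    have h2 : |t^δ - γ| ≤ 2*M^δ := by
      have := habs2 (t^δ) γ
      have h' : |t^δ| ≤ M^δ := by
        rw [abs_pow]; exact pow_le_pow_left₀ (abs_nonneg t) ht δ
      have hγabs : |γ| ≤ 1 := by rw [abs_of_pos hγ0]; linarith
      linarith
    calc |t*(1-t^δ)*(t^δ-γ)| = |t| * |1-t^δ| * |t^δ-γ| := by rw [abs_mul, abs_mul]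
      _ ≤ (M * (2*M^δ)) * (2*M^δ) :=
          mul_le_mul (mul_le_mul ht h1 (abs_nonneg _) hM0) h2 (abs_nonneg _) (by positivity)
      _ = 4*M^(2*δ+1) := by ring
  have hCab : |a*(1-a^δ)*(a^δ-γ) - b*(1-b^δ)*(b^δ-γ)| ≤ 8*M^(2*δ+1) := by
    have := habs2 (a*(1-a^δ)*(a^δ-γ)) (b*(1-b^δ)*(b^δ-γ))
    have h1 := hCt a hMa
    have h2 := hCt b hMb
    linarith
  calc |(a*(1-a^δ)*(a^δ-γ) - b*(1-b^δ)*(b^δ-γ)) * (a-b)|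
      = |a*(1-a^δ)*(a^δ-γ) - b*(1-b^δ)*(b^δ-γ)| * |a-b| := abs_mul _ _
    _ ≤ (8*M^(2*δ+1)) * (2*M) := mul_le_mul hCab hab (abs_nonneg _) (by positivity)
    _ = 16*M^(2*δ+2) := by ring
    _ ≤ 16 * (1 + |a|^(2*δ+2) + |b|^(2*δ+2)) := by
        have := huxley_MB a b (le_refl (2*δ+2))
        linarith

theorem stmt_10 {X : Type*} [MeasurableSpace X] (μ : Measure X) [IsFiniteMeasure μ]
    (δ : ℕ) (hδ : 0 < δ) (β γ : ℝ) (hβ : 0 < β) (hγ : γ ∈ Set.Ioo (0 : ℝ) 1)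
    (u v : X → ℝ) (hu : Measurable u) (hv : Measurable v)
    (hu2 : Integrable (fun x => |u x| ^ (2 * δ + 2)) μ)
    (hv2 : Integrable (fun x => |v x| ^ (2 * δ + 2)) μ)
    (w : X → ℝ) (hw : w = fun x => u x - v x)
    (C : ℝ → ℝ) (hC : ∀ t : ℝ, C t = t * (1 - t ^ δ) * (t ^ δ - γ)) :
    β * ∫ x, (C (u x) - C (v x)) * w x ∂μ ≤
      -(β * γ) * ∫ x, w x ^ 2 ∂μ - (β / 4) * ∫ x, u x ^ (2 * δ) * w x ^ 2 ∂μ -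
          (β / 4) * ∫ x, v x ^ (2 * δ) * w x ^ 2 ∂μ +
        β * 2 ^ (2 * δ - 1) * (1 + γ) ^ 2 * ((δ : ℝ) + 1) ^ 2 * ∫ x, w x ^ 2 ∂μ := by
  obtain ⟨hγ0, hγ1⟩ := hγ
  have hwx : ∀ x, w x = u x - v x := fun x => by rw [hw]
  have hwm : Measurable w := by rw [hw]; exact hu.sub hv
  have hGint : Integrable (fun x => 1 + |u x|^(2*δ+2) + |v x|^(2*δ+2)) μ :=
    ((integrable_const 1).add hu2).add hv2
  have hmaj : ∀ (f : X → ℝ) (c : ℝ), AEStronglyMeasurable f μ →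
      (∀ x, |f x| ≤ c * (1 + |u x|^(2*δ+2) + |v x|^(2*δ+2))) → Integrable f μ := by
    intro f c hfm hb
    exact Integrable.mono' (hGint.const_mul c) hfm (Filter.Eventually.of_forall hb)
  -- integrability
  have I1 : Integrable (fun x => w x ^ 2) μ := by
    apply hmaj _ 4 ((hwm.pow_const 2).aestronglyMeasurable)
    intro x
    rw [hwx x]
    exact bnd_w δ (u x) (v x)
  have I2 : Integrable (fun x => u x ^ (2*δ) * w x ^ 2) μ := by
    apply hmaj _ 4 (((hu.pow_const _).mul (hwm.pow_const 2)).aestronglyMeasurable)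
    intro x
    simp only [Pi.mul_apply]
    rw [hwx x]
    exact bnd_uw δ (u x) (v x)
  have I3 : Integrable (fun x => v x ^ (2*δ) * w x ^ 2) μ := by
    apply hmaj _ 4 (((hv.pow_const _).mul (hwm.pow_const 2)).aestronglyMeasurable)
    intro x
    simp only [Pi.mul_apply]
    rw [hwx x]
    have h := bnd_uw δ (v x) (u x)
    rw [show (v x - u x)^2 = (u x - v x)^2 by ring] at h
    linarith [h, abs_nonneg (v x ^ (2*δ) * (u x - v x)^2)]
  have I0 : Integrable (fun x => (C (u x) - C (v x)) * w x) μ := by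
    have he : (fun x => (C (u x) - C (v x)) * w x) =
        fun x => ((u x*(1-(u x)^δ)*((u x)^δ-γ)) - (v x*(1-(v x)^δ)*((v x)^δ-γ))) *
          (u x - v x) := by
      funext x
      rw [hC, hC, hwx x]
    rw [he]
    apply hmaj _ 16
    · apply Measurable.aestronglyMeasurable
      fun_prop
    · intro x
      exact bnd_C δ γ hγ0 hγ1 (u x) (v x)
  -- pointwise inequality
  have hpt : ∀ x, (C (u x) - C (v x)) * w x ≤
      -γ*(w x)^2 - (1/4)*(u x^(2*δ)*(w x)^2) - (1/4)*(v x^(2*δ)*(w x)^2)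
      + 2^(2*δ-1)*(1+γ)^2*((δ:ℝ)+1)^2*(w x)^2 := by
    intro x
    rw [hC, hC, hwx x]
    exact huxley_ptwise δ hδ γ hγ0 hγ1 (u x) (v x)
  have Jg : Integrable (fun x => -γ * w x ^ 2) μ := I1.const_mul (-γ)
  have Ju : Integrable (fun x => 1/4 * (u x ^ (2*δ) * w x ^ 2)) μ := I2.const_mul (1/4)
  have Jv : Integrable (fun x => 1/4 * (v x ^ (2*δ) * w x ^ 2)) μ := I3.const_mul (1/4)
  have JK : Integrable (fun x => 2^(2*δ-1)*(1+γ)^2*((δ:ℝ)+1)^2 * w x ^ 2) μ :=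
    I1.const_mul _
  have J1 : Integrable (fun x => -γ * w x ^ 2 - 1/4 * (u x ^ (2*δ) * w x ^ 2)) μ :=
    Jg.sub Ju
  have J2 : Integrable (fun x => -γ * w x ^ 2 - 1/4 * (u x ^ (2*δ) * w x ^ 2)
      - 1/4 * (v x ^ (2*δ) * w x ^ 2)) μ := J1.sub Jv
  have Ig : Integrable (fun x =>
      -γ*(w x)^2 - (1/4)*(u x^(2*δ)*(w x)^2) - (1/4)*(v x^(2*δ)*(w x)^2)
      + 2^(2*δ-1)*(1+γ)^2*((δ:ℝ)+1)^2*(w x)^2) μ := J2.add JK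
  have hle := integral_mono I0 Ig hpt
  have hgval : ∫ x, (-γ*(w x)^2 - (1/4)*(u x^(2*δ)*(w x)^2) - (1/4)*(v x^(2*δ)*(w x)^2)
      + 2^(2*δ-1)*(1+γ)^2*((δ:ℝ)+1)^2*(w x)^2) ∂μ =
      -γ * (∫ x, w x ^ 2 ∂μ) - (1/4) * (∫ x, u x ^ (2*δ) * w x ^ 2 ∂μ)
      - (1/4) * (∫ x, v x ^ (2*δ) * w x ^ 2 ∂μ)
      + 2^(2*δ-1)*(1+γ)^2*((δ:ℝ)+1)^2 * (∫ x, w x ^ 2 ∂μ) := by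
    rw [integral_add J2 JK, integral_sub J1 Jv, integral_sub Jg Ju,
        integral_const_mul, integral_const_mul, integral_const_mul, integral_const_mul]
  rw [hgval] at hle
  have hfin := mul_le_mul_of_nonneg_left hle hβ.le
  calc β * ∫ x, (C (u x) - C (v x)) * w x ∂μ
      ≤ β * (-γ * (∫ x, w x ^ 2 ∂μ) - (1/4) * (∫ x, u x ^ (2*δ) * w x ^ 2 ∂μ)
      - (1/4) * (∫ x, v x ^ (2*δ) * w x ^ 2 ∂μ)
      + 2^(2*δ-1)*(1+γ)^2*((δ:ℝ)+1)^2 * (∫ x, w x ^ 2 ∂μ)) := hfin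
    _ = -(β * γ) * ∫ x, w x ^ 2 ∂μ - (β / 4) * ∫ x, u x ^ (2 * δ) * w x ^ 2 ∂μ -
          (β / 4) * ∫ x, v x ^ (2 * δ) * w x ^ 2 ∂μ +
        β * 2 ^ (2 * δ - 1) * (1 + γ) ^ 2 * ((δ : ℝ) + 1) ^ 2 * ∫ x, w x ^ 2 ∂μ := by
        ring
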